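/- arXiv:0903.1951 — 2 statements merged into one kernel-verified Lean document; each statement's English description precedes it below -/
import Mathlib

section
/- Let $(\xi_i)$ be a stationary sequence with stationary filtration $(\mathcal{F}_i)$ and $\xi_0 \in L^2$, regular. If $\sum_{n=1}^\infty n^{-1/2} \log(n) \| \mathbf{E}(\xi_n|\mathcal{F}_0) \|_2 < \infty$ and $\sum_{n=1}^\infty n^{-1/2} \log(n) \| \xi_{-n} - \mathbf{E}(\xi_{-n}|\mathcal{F}_0) \|_2 < \infty$, then $\sum_{j\in\mathbb{Z}} \log(1+|j|) \| P_0(\xi_j) \|_2 < \infty$. -/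
open MeasureTheory Filter
open scoped ENNReal

open Finset

lemma key_log_ineq (k : ℕ) (hk : 2 ≤ k) :
    Real.log (2 + (k:ℝ)) ≤
      ∑ n ∈ Finset.Icc ((k+1)/2) k, (4/((n:ℝ)+1)) * Real.log ((n:ℝ)+1) := by
  set c : ℝ := (4/((k:ℝ)+1)) * Real.log ((k:ℝ)/2+1) with hc
  have hlognn : 0 ≤ Real.log ((k:ℝ)/2+1) := by
    apply Real.log_nonneg; have : (0:ℝ) ≤ (k:ℝ) := Nat.cast_nonneg k; linarith
  have hc0 : 0 ≤ c := by
    apply mul_nonneg (by positivity) hlognn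
  have hterm : ∀ n ∈ Finset.Icc ((k+1)/2) k, c ≤ (4/((n:ℝ)+1)) * Real.log ((n:ℝ)+1) := by
    intro n hn
    simp only [Finset.mem_Icc] at hn
    have hk2n : k ≤ 2*n := by omega
    have h1 : (k:ℝ) ≤ 2*(n:ℝ) := by exact_mod_cast hk2n
    have hn1 : (n:ℝ) ≤ (k:ℝ) := by exact_mod_cast hn.2
    have hnn : (0:ℝ) ≤ (n:ℝ) := Nat.cast_nonneg n
    apply mul_le_mul
    · apply div_le_div_of_nonneg_left (by norm_num) (by linarith) (by linarith)
    · exact Real.log_le_log (by linarith) (by linarith)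
    · exact hlognn
    · positivity
  have hsum := Finset.card_nsmul_le_sum _ _ _ hterm
  have hck : (Finset.Icc ((k+1)/2) k).card = k + 1 - (k+1)/2 := Nat.card_Icc _ _
  have hcard : ((k:ℝ)+1)/2 ≤ ((Finset.Icc ((k+1)/2) k).card : ℝ) := by
    rw [hck]
    have h2 : (k+1)/2 ≤ k+1 := Nat.div_le_self _ _
    rw [Nat.cast_sub h2]
    have hle : (((k+1)/2 : ℕ) : ℝ) ≤ ((k:ℝ)+1)/2 := by
      have := Nat.div_mul_le_self (k+1) 2
      have h3 : (( (k+1)/2 * 2 : ℕ) : ℝ) ≤ ((k+1 : ℕ) : ℝ) := by exact_mod_cast this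
      push_cast at h3 ⊢
      linarith
    push_cast
    linarith
  have hkey : Real.log (2 + (k:ℝ)) ≤ (((k:ℝ)+1)/2) * c := by
    have hid : (((k:ℝ)+1)/2) * (4/((k:ℝ)+1)) = 2 := by
      have : (k:ℝ)+1 ≠ 0 := by positivity
      field_simp; ring
    have h2 : (((k:ℝ)+1)/2) * c = 2 * Real.log ((k:ℝ)/2+1) := by
      rw [hc, ← mul_assoc, hid]
    rw [h2]
    have hsq : Real.log (2 + (k:ℝ)) ≤ Real.log (((k:ℝ)/2+1)^2) := by
      apply Real.log_le_log (by positivity)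
      have hk' : (2:ℝ) ≤ (k:ℝ) := by exact_mod_cast hk
      nlinarith
    calc Real.log (2 + (k:ℝ)) ≤ Real.log (((k:ℝ)/2+1)^2) := hsq
      _ = 2 * Real.log ((k:ℝ)/2+1) := by
          rw [Real.log_pow]; norm_num
  calc Real.log (2 + (k:ℝ)) ≤ (((k:ℝ)+1)/2) * c := hkey
    _ ≤ ((Finset.Icc ((k+1)/2) k).card : ℝ) * c := by
        exact mul_le_mul_of_nonneg_right hcard hc0
    _ ≤ ∑ n ∈ Finset.Icc ((k+1)/2) k, (4/((n:ℝ)+1)) * Real.log ((n:ℝ)+1) := by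
        simpa [nsmul_eq_mul] using hsum


lemma series_lemma {u a : ℕ → ℝ} (hu : ∀ k, 0 ≤ u k) (ha : ∀ n, 0 ≤ a n)
    (htail : ∀ n N, ∑ k ∈ Finset.Icc n N, u k ^ 2 ≤ a n ^ 2)
    (hsum : Summable (fun n : ℕ => ((n:ℝ)+1) ^ (-(1/2:ℝ)) * Real.log ((n:ℝ)+1) * a n)) :
    Summable (fun k : ℕ => Real.log (2 + (k:ℝ)) * u k) := by
  classical
  set w : ℕ → ℝ := fun n => ((n:ℝ)+1) ^ (-(1/2:ℝ)) * Real.log ((n:ℝ)+1) * a n with hw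
  have hlognn : ∀ n : ℕ, 0 ≤ Real.log ((n:ℝ)+1) := by
    intro n; apply Real.log_nonneg; have : (0:ℝ) ≤ (n:ℝ) := Nat.cast_nonneg n; linarith
  have hg0 : ∀ k : ℕ, 0 ≤ Real.log (2 + (k:ℝ)) * u k := by
    intro k
    apply mul_nonneg _ (hu k)
    apply Real.log_nonneg; have : (0:ℝ) ≤ (k:ℝ) := Nat.cast_nonneg k; linarith
  have hw0 : ∀ n, 0 ≤ w n := by
    intro n
    exact mul_nonneg (mul_nonneg (Real.rpow_nonneg (by positivity) _) (hlognn n)) (ha n)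
  -- window Cauchy-Schwarz bound
  have hwin : ∀ n : ℕ, ∑ k ∈ Finset.Icc n (2*n), u k ≤ ((n:ℝ)+1) ^ ((1/2:ℝ)) * a n := by
    intro n
    have hcs : (∑ k ∈ Finset.Icc n (2*n), u k)^2 ≤
        ((Finset.Icc n (2*n)).card : ℝ) * ∑ k ∈ Finset.Icc n (2*n), u k ^ 2 :=
      sq_sum_le_card_mul_sum_sq
    have hcard : ((Finset.Icc n (2*n)).card : ℝ) = (n:ℝ)+1 := by
      rw [Nat.card_Icc]
      have : 2*n + 1 - n = n + 1 := by omega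
      rw [this]; push_cast; ring
    have hx : (((n:ℝ)+1) ^ ((1/2:ℝ)))^2 = (n:ℝ)+1 := by
      rw [← Real.rpow_natCast (((n:ℝ)+1) ^ ((1/2:ℝ))) 2, ← Real.rpow_mul (by positivity)]
      norm_num
    have h2 : (∑ k ∈ Finset.Icc n (2*n), u k)^2 ≤ (((n:ℝ)+1) ^ ((1/2:ℝ)) * a n)^2 := by
      rw [mul_pow, hx]
      refine hcs.trans ?_
      rw [hcard]
      exact mul_le_mul_of_nonneg_left (htail n (2*n)) (by positivity)
    have hs0 : 0 ≤ ∑ k ∈ Finset.Icc n (2*n), u k := Finset.sum_nonneg fun k _ => hu k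
    have hrhs0 : 0 ≤ ((n:ℝ)+1) ^ ((1/2:ℝ)) * a n :=
      mul_nonneg (Real.rpow_nonneg (by positivity) _) (ha n)
    nlinarith
  -- weight identity
  have hwt : ∀ n : ℕ, (4/((n:ℝ)+1)) * Real.log ((n:ℝ)+1) * (((n:ℝ)+1) ^ ((1/2:ℝ)) * a n)
      = 4 * w n := by
    intro n
    have hpos : (0:ℝ) < (n:ℝ)+1 := by positivity
    have hr : ((n:ℝ)+1) ^ (-(1/2:ℝ)) = ((n:ℝ)+1) ^ ((1/2:ℝ)) * ((n:ℝ)+1)⁻¹ := by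
      rw [← Real.rpow_neg_one ((n:ℝ)+1), ← Real.rpow_add hpos]
      norm_num
    rw [hw]
    simp only []
    rw [hr]
    field_simp
  -- the double-sum kernel
  set F : ℕ → ℕ → ℝ := fun k n =>
    if n ≤ k ∧ k ≤ 2*n then (4/((n:ℝ)+1)) * Real.log ((n:ℝ)+1) * u k else 0 with hF
  have hF0 : ∀ k n, 0 ≤ F k n := by
    intro k n
    rw [hF]
    simp only []
    split
    · exact mul_nonneg (mul_nonneg (by positivity) (hlognn n)) (hu k)
    · exact le_rfl
  -- step 1: pointwise domination for k ≥ 2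
  have hstep1 : ∀ K k, k ∈ Finset.range K → 2 ≤ k →
      Real.log (2 + (k:ℝ)) * u k ≤ ∑ n ∈ Finset.range K, F k n := by
    intro K k hkK hk2
    have hkK' : k + 1 ≤ K := Finset.mem_range.mp hkK
    have hsub : Finset.Icc ((k+1)/2) k ⊆ Finset.range K := by
      intro n hn
      simp only [Finset.mem_Icc] at hn
      exact Finset.mem_range.mpr (by omega)
    have heq : ∑ n ∈ Finset.Icc ((k+1)/2) k, F k n
        = (∑ n ∈ Finset.Icc ((k+1)/2) k, (4/((n:ℝ)+1)) * Real.log ((n:ℝ)+1)) * u k := by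
      rw [Finset.sum_mul]
      apply Finset.sum_congr rfl
      intro n hn
      simp only [Finset.mem_Icc] at hn
      have hcond : n ≤ k ∧ k ≤ 2*n := ⟨hn.2, by omega⟩
      rw [hF]
      simp only [hcond, and_self, if_true]
    have h1 : Real.log (2 + (k:ℝ)) * u k
        ≤ ∑ n ∈ Finset.Icc ((k+1)/2) k, F k n := by
      rw [heq]
      exact mul_le_mul_of_nonneg_right (key_log_ineq k hk2) (hu k)
    exact h1.trans (Finset.sum_le_sum_of_subset_of_nonneg hsub (fun n _ _ => hF0 k n))
  -- step 2: column sums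
  have hstep2 : ∀ K n, ∑ k ∈ Finset.range K, F k n ≤ 4 * w n := by
    intro K n
    have h1 : ∑ k ∈ Finset.range K, F k n
        = ∑ k ∈ (Finset.range K).filter (fun k => n ≤ k ∧ k ≤ 2*n),
            (4/((n:ℝ)+1)) * Real.log ((n:ℝ)+1) * u k := by
      rw [Finset.sum_filter]
    have hsub : (Finset.range K).filter (fun k => n ≤ k ∧ k ≤ 2*n) ⊆ Finset.Icc n (2*n) := by
      intro k hk
      simp only [Finset.mem_filter, Finset.mem_range] at hk
      exact Finset.mem_Icc.mpr ⟨hk.2.1, hk.2.2⟩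
    have h2 : ∑ k ∈ (Finset.range K).filter (fun k => n ≤ k ∧ k ≤ 2*n),
            (4/((n:ℝ)+1)) * Real.log ((n:ℝ)+1) * u k
        ≤ ∑ k ∈ Finset.Icc n (2*n), (4/((n:ℝ)+1)) * Real.log ((n:ℝ)+1) * u k := by
      apply Finset.sum_le_sum_of_subset_of_nonneg hsub
      intro k _ _
      exact mul_nonneg (mul_nonneg (by positivity) (hlognn n)) (hu k)
    have h3 : ∑ k ∈ Finset.Icc n (2*n), (4/((n:ℝ)+1)) * Real.log ((n:ℝ)+1) * u k
        = (4/((n:ℝ)+1)) * Real.log ((n:ℝ)+1) * ∑ k ∈ Finset.Icc n (2*n), u k := by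
      rw [Finset.mul_sum]
    have h4 : (4/((n:ℝ)+1)) * Real.log ((n:ℝ)+1) * ∑ k ∈ Finset.Icc n (2*n), u k
        ≤ (4/((n:ℝ)+1)) * Real.log ((n:ℝ)+1) * (((n:ℝ)+1) ^ ((1/2:ℝ)) * a n) := by
      apply mul_le_mul_of_nonneg_left (hwin n)
      exact mul_nonneg (by positivity) (hlognn n)
    rw [h1]
    calc _ ≤ _ := h2
      _ = _ := h3
      _ ≤ _ := h4
      _ = 4 * w n := hwt n
  -- assemble: bounded partial sums
  have hWsum : Summable w := hsum
  apply summable_of_sum_range_le (c := (Real.log (2+(0:ℕ):ℝ) * u 0 + Real.log (2+(1:ℕ):ℝ) * u 1)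
      + 4 * ∑' n, w n) hg0
  intro K
  have hsplit : ∑ k ∈ Finset.range K, Real.log (2 + (k:ℝ)) * u k
      = ∑ k ∈ (Finset.range K).filter (fun k => k < 2), Real.log (2 + (k:ℝ)) * u k
      + ∑ k ∈ (Finset.range K).filter (fun k => ¬ k < 2), Real.log (2 + (k:ℝ)) * u k :=
    (Finset.sum_filter_add_sum_filter_not _ _ _).symm
  have hsmall : ∑ k ∈ (Finset.range K).filter (fun k => k < 2), Real.log (2 + (k:ℝ)) * u k
      ≤ Real.log (2+(0:ℕ):ℝ) * u 0 + Real.log (2+(1:ℕ):ℝ) * u 1 := by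
    have hsub : (Finset.range K).filter (fun k => k < 2) ⊆ {0, 1} := by
      intro k hk
      simp only [Finset.mem_filter] at hk
      simp only [Finset.mem_insert, Finset.mem_singleton]
      omega
    refine le_trans (Finset.sum_le_sum_of_subset_of_nonneg hsub (fun k _ _ => hg0 k)) ?_
    rw [Finset.sum_insert (by norm_num), Finset.sum_singleton]
  have hbig : ∑ k ∈ (Finset.range K).filter (fun k => ¬ k < 2), Real.log (2 + (k:ℝ)) * u k
      ≤ ∑ k ∈ Finset.range K, ∑ n ∈ Finset.range K, F k n := by
    refine le_trans (Finset.sum_le_sum (fun k hk => ?_))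
      (Finset.sum_le_sum_of_subset_of_nonneg (Finset.filter_subset _ _)
        (fun k _ _ => Finset.sum_nonneg (fun n _ => hF0 k n)))
    simp only [Finset.mem_filter, not_lt] at hk
    exact hstep1 K k hk.1 hk.2
  have hdouble : ∑ k ∈ Finset.range K, ∑ n ∈ Finset.range K, F k n ≤ 4 * ∑' n, w n := by
    rw [Finset.sum_comm]
    have h1 : ∑ n ∈ Finset.range K, ∑ k ∈ Finset.range K, F k n
        ≤ ∑ n ∈ Finset.range K, 4 * w n :=
      Finset.sum_le_sum (fun n _ => hstep2 K n)
    refine h1.trans ?_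
    rw [← Finset.mul_sum]
    have : ∑ n ∈ Finset.range K, w n ≤ ∑' n, w n :=
      Summable.sum_le_tsum _ (fun n _ => hw0 n) hWsum
    linarith
  rw [hsplit]
  linarith
section Hilbert

variable {α : Type*} {m m' m0 : MeasurableSpace α} {μ : Measure α} [IsProbabilityMeasure μ]

lemma integrable_mul2 {f g : α → ℝ} (hf : MemLp f 2 μ) (hg : MemLp g 2 μ) :
    Integrable (fun x => f x * g x) μ := by
  have h : MemLp (f • g) 1 μ := hg.smul hf
  have := memLp_one_iff_integrable.mp h
  exact this

lemma condexp_ae_eq_condexpL2' (hm : m ≤ m0) {f : α → ℝ} (hf : MemLp f 2 μ) :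
    μ[f|m] =ᵐ[μ] (condExpL2 ℝ ℝ hm (hf.toLp f) : α →₂[μ] ℝ) := by
  refine (ae_eq_condExp_of_forall_setIntegral_eq hm (hf.integrable one_le_two)
    (fun s hs hμs => integrableOn_condExpL2_of_measure_ne_top hm hμs.ne _)
    (fun s hs hμs => ?_) (aestronglyMeasurable_condExpL2 hm _)).symm
  rw [integral_condExpL2_eq hm (hf.toLp f) hs hμs.ne]
  exact setIntegral_congr_ae (hm s hs) ((hf.coeFn_toLp).mono fun x hx _ => hx)

lemma memℒp2_condexp (hm : m ≤ m0) {f : α → ℝ} (hf : MemLp f 2 μ) :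
    MemLp (μ[f|m]) 2 μ :=
  (Lp.memLp _).ae_eq (condexp_ae_eq_condexpL2' hm hf).symm

lemma integral_mul_condexp_self (hm : m ≤ m0) {g : α → ℝ} (hg : MemLp g 2 μ) :
    ∫ x, g x * (μ[g|m]) x ∂μ = ∫ x, ((μ[g|m]) x)^2 ∂μ := by
  have hY : MemLp (μ[g|m]) 2 μ := memℒp2_condexp hm hg
  have hint : Integrable (fun x => (μ[g|m]) x * g x) μ := integrable_mul2 hY hg
  have hint' : Integrable ((μ[g|m]) * g) μ := by
    exact hint
  have hmul := condExp_mul_of_stronglyMeasurable_left (m := m) (mΩ := m0) (μ := μ)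
    (stronglyMeasurable_condExp (f := g)) hint' (hg.integrable one_le_two)
  calc ∫ x, g x * (μ[g|m]) x ∂μ = ∫ x, ((μ[g|m]) * g) x ∂μ := by
        simp_rw [Pi.mul_apply, mul_comm]
    _ = ∫ x, (μ[(μ[g|m]) * g|m]) x ∂μ := (integral_condExp hm).symm
    _ = ∫ x, ((μ[g|m]) x)^2 ∂μ := by
        refine integral_congr_ae (hmul.mono fun x hx => ?_)
        simp only [hx, Pi.mul_apply]
        ring

lemma pythagoras (hm : m ≤ m0) {g : α → ℝ} (hg : MemLp g 2 μ) :
    ∫ x, (g x)^2 ∂μ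
      = ∫ x, (g x - (μ[g|m]) x)^2 ∂μ + ∫ x, ((μ[g|m]) x)^2 ∂μ := by
  have hY : MemLp (μ[g|m]) 2 μ := memℒp2_condexp hm hg
  have h1 : Integrable (fun x => (g x)^2) μ := hg.integrable_sq
  have h2 : Integrable (fun x => ((μ[g|m]) x)^2) μ := hY.integrable_sq
  have h3 : Integrable (fun x => g x * (μ[g|m]) x) μ := integrable_mul2 hg hY
  have key := integral_mul_condexp_self hm hg
  have expand : ∀ x, (g x - (μ[g|m]) x)^2
      = ((g x)^2 - 2*(g x * (μ[g|m]) x)) + ((μ[g|m]) x)^2 := by intro x; ring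
  have h4 : ∫ x, (g x - (μ[g|m]) x)^2 ∂μ
      = ∫ x, (((g x)^2 - 2*(g x * (μ[g|m]) x)) + ((μ[g|m]) x)^2) ∂μ := by
    simp only [expand]
  have h5 : ∫ x, (((g x)^2 - 2*(g x * (μ[g|m]) x)) + ((μ[g|m]) x)^2) ∂μ
      = (∫ x, (g x)^2 ∂μ - 2 * ∫ x, g x * (μ[g|m]) x ∂μ) + ∫ x, ((μ[g|m]) x)^2 ∂μ := by
    have h6 : Integrable (fun x => g x ^ 2 - 2 * (g x * (μ[g|m]) x)) μ :=
      h1.sub (h3.const_mul 2)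
    rw [integral_add h6 h2, integral_sub h1 (h3.const_mul 2), MeasureTheory.integral_const_mul]
  rw [h4, h5, key]
  ring

lemma condexp_sq_le (hm : m ≤ m0) {g : α → ℝ} (hg : MemLp g 2 μ) :
    ∫ x, ((μ[g|m]) x)^2 ∂μ ≤ ∫ x, (g x)^2 ∂μ := by
  have h := pythagoras hm hg
  have h0 : 0 ≤ ∫ x, (g x - (μ[g|m]) x)^2 ∂μ := integral_nonneg (fun x => sq_nonneg _)
  linarith

lemma pythagoras_nested (hm' : m' ≤ m) (hm : m ≤ m0) {g : α → ℝ} (hg : MemLp g 2 μ) :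
    ∫ x, ((μ[g|m]) x)^2 ∂μ
      = ∫ x, ((μ[g|m]) x - (μ[g|m']) x)^2 ∂μ + ∫ x, ((μ[g|m']) x)^2 ∂μ := by
  have hY : MemLp (μ[g|m]) 2 μ := memℒp2_condexp hm hg
  have h := pythagoras (hm'.trans hm) hY
  have hcc : μ[μ[g|m]|m'] =ᵐ[μ] μ[g|m'] := condExp_condExp_of_le hm' hm
  have e1 : ∫ x, ((μ[g|m]) x - (μ[μ[g|m]|m']) x)^2 ∂μ
      = ∫ x, ((μ[g|m]) x - (μ[g|m']) x)^2 ∂μ :=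
    integral_congr_ae (hcc.mono fun x hx => by simp only [hx])
  have e2 : ∫ x, ((μ[μ[g|m]|m']) x)^2 ∂μ = ∫ x, ((μ[g|m']) x)^2 ∂μ :=
    integral_congr_ae (hcc.mono fun x hx => by simp only [hx])
  rw [h, e1, e2]
end Hilbert

lemma toReal_eLpNorm_two_sq {α : Type*} {m0 : MeasurableSpace α} {μ : Measure α} {g : α → ℝ}
    (hg : MemLp g 2 μ) : ((eLpNorm g 2 μ).toReal)^2 = ∫ x, (g x)^2 ∂μ := by
  rw [hg.eLpNorm_eq_integral_rpow_norm two_ne_zero ENNReal.ofNat_ne_top]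
  have h2 : (2:ℝ≥0∞).toReal = 2 := by norm_num
  rw [h2]
  have hI0 : 0 ≤ ∫ a, ‖g a‖ ^ (2:ℝ) ∂μ :=
    integral_nonneg (fun a => Real.rpow_nonneg (norm_nonneg _) _)
  rw [ENNReal.toReal_ofReal (Real.rpow_nonneg hI0 _)]
  have hpow : ((∫ a, ‖g a‖ ^ (2:ℝ) ∂μ) ^ ((2:ℝ))⁻¹)^(2:ℕ) = ∫ a, ‖g a‖ ^ (2:ℝ) ∂μ := by
    rw [← Real.rpow_natCast (_ ^ ((2:ℝ))⁻¹) 2, ← Real.rpow_mul hI0]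
    norm_num
  rw [hpow]
  apply integral_congr_ae
  filter_upwards with a
  rw [show ((2:ℝ)) = ((2:ℕ):ℝ) by norm_num, Real.rpow_natCast]
  simp [sq_abs]

lemma condexp_comp_shift
    {Ω : Type*} {m0 : MeasurableSpace Ω} (μ : Measure Ω) [IsProbabilityMeasure μ]
    (T : ℤ → Ω → Ω) (hT0 : T 0 = id) (hTadd : ∀ i j : ℤ, ∀ ω, T (i + j) ω = T i (T j ω))
    (hTmp : ∀ i, MeasurePreserving (T i) μ μ)
    (ℱ : ℤ → MeasurableSpace Ω)
    (hcom : ∀ i j : ℤ, ℱ i = MeasurableSpace.comap (T j) (ℱ (i - j))) (hℱle : ∀ i, ℱ i ≤ m0)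
    (j i : ℤ) {g : Ω → ℝ} (hg : Integrable g μ) :
    μ[(fun ω => g (T j ω)) | ℱ i] =ᵐ[μ] (fun ω => (μ[g | ℱ (i - j)]) (T j ω)) := by
  have hTmeas : ∀ k : ℤ, Measurable (T k) := fun k => (hTmp k).measurable
  let e : Ω ≃ᵐ Ω :=
    { toEquiv := Equiv.mk (T j) (T (-j))
        (fun ω => by rw [← hTadd]; simp [hT0])
        (fun ω => by rw [← hTadd]; simp [hT0])
      measurable_toFun := hTmeas j
      measurable_invFun := hTmeas (-j) }
  have hemb : MeasurableEmbedding (T j) := e.measurableEmbedding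
  have hcomap : ℱ i = MeasurableSpace.comap (T j) (ℱ (i - j)) := hcom i j
  have hgT : Integrable (fun ω => g (T j ω)) μ :=
    memLp_one_iff_integrable.mp
      ((memLp_one_iff_integrable.mpr hg).comp_measurePreserving (hTmp j))
  have hcand : Integrable (fun ω => (μ[g | ℱ (i - j)]) (T j ω)) μ :=
    memLp_one_iff_integrable.mp
      ((memLp_one_iff_integrable.mpr (integrable_condExp (m := ℱ (i-j)))).comp_measurePreserving
        (hTmp j))
  refine (ae_eq_condExp_of_forall_setIntegral_eq (hℱle i) hgT
    (fun s _ _ => hcand.integrableOn)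
    (fun s hs hμs => ?_) ?_).symm
  · -- set integral equality
    rw [hcomap] at hs
    rw [MeasurableSpace.measurableSet_comap] at hs
    obtain ⟨t, ht, rfl⟩ := hs
    rw [(hTmp j).setIntegral_preimage_emb hemb, (hTmp j).setIntegral_preimage_emb hemb]
    exact setIntegral_condExp (hℱle (i-j)) hg ht
  · -- measurability
    have hsm : StronglyMeasurable[ℱ (i-j)] (μ[g | ℱ (i - j)]) := stronglyMeasurable_condExp
    have hTj : Measurable[ℱ i, ℱ (i-j)] (T j) := by
      rw [hcomap]
      exact fun s hs => MeasurableSpace.measurableSet_comap.mpr ⟨s, hs, rfl⟩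
    exact (hsm.comp_measurable hTj).aestronglyMeasurable

/-- The projection operator `P_i(f) = E(f|𝓕_i) - E(f|𝓕_{i-1})`. -/
noncomputable def Pproj {Ω : Type*} {m0 : MeasurableSpace Ω} (μ : Measure Ω)
    (ℱ : ℤ → MeasurableSpace Ω) (i : ℤ) (f : Ω → ℝ) : Ω → ℝ :=
  μ[f | ℱ i] - μ[f | ℱ (i - 1)]

set_option maxHeartbeats 1000000 in
/-- Remark 8 of the paper: under the logarithmic projective conditions
`∑ n^{-1/2} log n ‖E(ξ_n|𝓕_0)‖₂ < ∞` and `∑ n^{-1/2} log n ‖ξ_{-n} - E(ξ_{-n}|𝓕_0)‖₂ < ∞`,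
one has `∑_{j∈ℤ} log(1+|j|) ‖P_0(ξ_j)‖₂ < ∞`. -/
theorem stmt_7 {Ω : Type*} {m0 : MeasurableSpace Ω} (μ : Measure Ω) [IsProbabilityMeasure μ]
    (T : ℤ → Ω → Ω) (hT0 : T 0 = id) (hTadd : ∀ i j : ℤ, ∀ ω, T (i + j) ω = T i (T j ω))
    (hTmp : ∀ i, MeasurePreserving (T i) μ μ)
    (F0 : MeasurableSpace Ω)
    (ℱ : ℤ → MeasurableSpace Ω) (hℱdef : ∀ i, ℱ i = MeasurableSpace.comap (T i) F0)
    (hℱmono : Monotone ℱ) (hℱle : ∀ i, ℱ i ≤ m0)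
    (ξ0 : Ω → ℝ)
    (hL2 : MeasureTheory.MemLp ξ0 2 μ)
    (hreg : μ[ξ0 | ⨅ n : ℕ, ℱ (-(n : ℤ))] =ᵐ[μ] 0)
    (hmeas : StronglyMeasurable[⨆ i : ℤ, ℱ i] ξ0)
    (h1 : ∑' n : ℕ, ((n : ℝ≥0∞) + 1) ^ (-(1 / 2 : ℝ)) *
        ENNReal.ofReal (Real.log ((n : ℝ) + 1)) *
        eLpNorm (μ[fun ω => ξ0 (T ((n : ℤ) + 1) ω) | ℱ 0]) 2 μ < ⊤)
    (h2 : ∑' n : ℕ, ((n : ℝ≥0∞) + 1) ^ (-(1 / 2 : ℝ)) *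
        ENNReal.ofReal (Real.log ((n : ℝ) + 1)) *
        eLpNorm
          (fun ω => ξ0 (T (-((n : ℤ) + 1)) ω) -
            (μ[fun ω' => ξ0 (T (-((n : ℤ) + 1)) ω') | ℱ 0]) ω) 2 μ < ⊤) :
    ∑' j : ℤ, ENNReal.ofReal (Real.log (1 + |(j : ℤ)|)) *
        eLpNorm (Pproj μ ℱ 0 (fun ω => ξ0 (T j ω))) 2 μ < ⊤ := by
  clear hreg hmeas
  have hcom : ∀ i j : ℤ, ℱ i = MeasurableSpace.comap (T j) (ℱ (i - j)) := by
    intro i j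
    have hTi : T i = (T (i-j)) ∘ (T j) := by
      funext ω
      rw [Function.comp_apply, ← hTadd]
      norm_num
    rw [hℱdef i, hℱdef (i-j), hTi, MeasurableSpace.comap_comp]
  clear hℱdef
  clear F0
  have hint : Integrable ξ0 μ := hL2.integrable one_le_two
  have hshift : ∀ (j i : ℤ), μ[(fun ω => ξ0 (T j ω)) | ℱ i]
      =ᵐ[μ] (fun ω => (μ[ξ0 | ℱ (i - j)]) (T j ω)) :=
    fun j i => condexp_comp_shift μ T hT0 hTadd hTmp ℱ hcom hℱle j i hint
  have hMc : ∀ i : ℤ, MemLp (μ[ξ0 | ℱ i]) 2 μ := fun i => memℒp2_condexp (hℱle i) hL2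
  have hMP : ∀ i : ℤ, MemLp (Pproj μ ℱ i ξ0) 2 μ := fun i => (hMc i).sub (hMc (i-1))
  set q : ℤ → ℝ := fun i => ∫ x, ((μ[ξ0|ℱ i]) x)^2 ∂μ with hq
  set v : ℤ → ℝ := fun i => (eLpNorm (Pproj μ ℱ i ξ0) 2 μ).toReal with hv
  have hv0 : ∀ i, 0 ≤ v i := fun i => ENNReal.toReal_nonneg
  have hq0 : ∀ i, 0 ≤ q i := fun i => integral_nonneg (fun x => sq_nonneg _)
  have hqle : ∀ i, q i ≤ ∫ x, (ξ0 x)^2 ∂μ := fun i => condexp_sq_le (hℱle i) hL2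
  have hstep : ∀ i : ℤ, q i = v i ^ 2 + q (i - 1) := by
    intro i
    have hmono : ℱ (i-1) ≤ ℱ i := hℱmono (by omega)
    have hpy := pythagoras_nested hmono (hℱle i) hL2
    have hv2 : v i ^ 2 = ∫ x, ((μ[ξ0|ℱ i]) x - (μ[ξ0|ℱ (i-1)]) x)^2 ∂μ := by
      rw [hv]
      simp only []
      rw [toReal_eLpNorm_two_sq (hMP i)]
      apply integral_congr_ae
      filter_upwards with x
      simp [Pproj]
    rw [hq]
    simp only []
    rw [hpy, hv2]
  -- telescoping identities
  have htel_down : ∀ (i : ℤ) (c : ℕ),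
      ∑ t ∈ Finset.range c, v (i - (t:ℤ)) ^ 2 = q i - q (i - (c:ℕ)) := by
    intro i c
    induction c with
    | zero => simp
    | succ c ih =>
      rw [Finset.sum_range_succ, ih]
      have h := hstep (i - (c:ℤ))
      have he : i - ((c+1:ℕ):ℤ) = (i - (c:ℤ)) - 1 := by push_cast; ring
      rw [he]
      linarith
  have htel_up : ∀ (i : ℤ) (c : ℕ),
      ∑ t ∈ Finset.range c, v (i + 1 + (t:ℤ)) ^ 2 = q (i + (c:ℕ)) - q i := by
    intro i c
    induction c with
    | zero => simp
    | succ c ih =>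
      rw [Finset.sum_range_succ, ih]
      have h := hstep (i + (c:ℤ) + 1)
      have e1 : i + ((c+1:ℕ):ℤ) = i + (c:ℤ) + 1 := by push_cast; ring
      have e2 : i + (c:ℤ) + 1 - 1 = i + (c:ℤ) := by ring
      have e3 : i + 1 + (c:ℤ) = i + (c:ℤ) + 1 := by ring
      rw [e1, e3]
      rw [e2] at h
      linarith
  set A : ℕ → ℝ := fun n => (eLpNorm (μ[ξ0|ℱ (-(n:ℤ))]) 2 μ).toReal with hA
  set B : ℕ → ℝ := fun n => (eLpNorm (fun ω => ξ0 ω - (μ[ξ0|ℱ ((n:ℤ))]) ω) 2 μ).toReal with hB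
  have hA0 : ∀ n, 0 ≤ A n := fun n => ENNReal.toReal_nonneg
  have hB0 : ∀ n, 0 ≤ B n := fun n => ENNReal.toReal_nonneg
  have hA2 : ∀ n : ℕ, A n ^ 2 = q (-(n:ℤ)) := by
    intro n
    rw [hA]
    simp only []
    rw [toReal_eLpNorm_two_sq (hMc _)]
  have hB2 : ∀ n : ℕ, B n ^ 2 = (∫ x, (ξ0 x)^2 ∂μ) - q ((n:ℤ)) := by
    intro n
    have hpy := pythagoras (hℱle ((n:ℤ))) hL2
    have hqn : q ((n:ℤ)) = ∫ x, ((μ[ξ0|ℱ ((n:ℤ))]) x)^2 ∂μ := rfl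
    rw [hB]
    simp only []
    rw [toReal_eLpNorm_two_sq (g := fun ω => ξ0 ω - (μ[ξ0|ℱ ((n:ℤ))]) ω) (hL2.sub (hMc ((n:ℤ))))]
    linarith
  -- tail bounds
  have htail_neg : ∀ n N : ℕ, ∑ k ∈ Finset.Icc n N, (v (-(k:ℤ)-1))^2 ≤ (A (n+1)) ^ 2 := by
    intro n N
    by_cases hnN : n ≤ N
    · have hre : ∑ k ∈ Finset.Icc n N, (v (-(k:ℤ)-1))^2
          = ∑ t ∈ Finset.range (N+1-n), (v ((-(n:ℤ)-1) - (t:ℤ)))^2 := by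
        rw [← Finset.Ico_add_one_right_eq_Icc, Finset.sum_Ico_eq_sum_range]
        apply Finset.sum_congr rfl
        intro t _
        have he : -((n+t:ℕ):ℤ)-1 = (-(n:ℤ)-1) - (t:ℤ) := by push_cast; ring
        rw [he]
      rw [hre, htel_down]
      have h0 := hq0 ((-(n:ℤ)-1) - ((N+1-n:ℕ):ℤ))
      have hAq : A (n+1) ^ 2 = q (-(n:ℤ)-1) := by
        rw [hA2]
        have : (-(((n+1):ℕ):ℤ)) = -(n:ℤ)-1 := by push_cast; ring
        rw [this]
      linarith
    · rw [Finset.Icc_eq_empty (by omega), Finset.sum_empty]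
      positivity
  have htail_pos : ∀ n N : ℕ, ∑ k ∈ Finset.Icc n N, (v ((k:ℤ)+1))^2 ≤ (B n) ^ 2 := by
    intro n N
    by_cases hnN : n ≤ N
    · have hre : ∑ k ∈ Finset.Icc n N, (v ((k:ℤ)+1))^2
          = ∑ t ∈ Finset.range (N+1-n), (v ((n:ℤ) + 1 + (t:ℤ)))^2 := by
        rw [← Finset.Ico_add_one_right_eq_Icc, Finset.sum_Ico_eq_sum_range]
        apply Finset.sum_congr rfl
        intro t _
        have he : ((n+t:ℕ):ℤ)+1 = (n:ℤ)+1+(t:ℤ) := by push_cast; ring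
        rw [he]
      rw [hre, htel_up, hB2]
      have := hqle ((n:ℤ) + ((N+1-n:ℕ):ℤ))
      linarith
    · rw [Finset.Icc_eq_empty (by omega), Finset.sum_empty]
      positivity
  -- stationarity identities
  have hstat1 : ∀ j : ℤ, eLpNorm (Pproj μ ℱ 0 (fun ω => ξ0 (T j ω))) 2 μ
      = eLpNorm (Pproj μ ℱ (-j) ξ0) 2 μ := by
    intro j
    have h0 := hshift j 0
    have h1' := hshift j (0-1)
    rw [show (0:ℤ) - j = -j by ring] at h0
    rw [show (0:ℤ) - 1 - j = -j - 1 by ring] at h1'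
    have hae : Pproj μ ℱ 0 (fun ω => ξ0 (T j ω))
        =ᵐ[μ] ((Pproj μ ℱ (-j) ξ0) ∘ (T j)) := by
      filter_upwards [h0, h1'] with ω e0 e1
      simp only [Pproj, Pi.sub_apply, Function.comp_apply, e0, e1]
    rw [eLpNorm_congr_ae hae]
    exact eLpNorm_comp_measurePreserving (g := Pproj μ ℱ (-j) ξ0)
      (hMP (-j)).aestronglyMeasurable (hTmp j)
  have hstat2 : ∀ n : ℕ, eLpNorm (μ[fun ω => ξ0 (T ((n:ℤ) + 1) ω)|ℱ 0]) 2 μ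
      = eLpNorm (μ[ξ0|ℱ (-(n:ℤ)-1)]) 2 μ := by
    intro n
    have h0 := hshift ((n:ℤ)+1) 0
    rw [show (0:ℤ) - ((n:ℤ)+1) = -(n:ℤ)-1 by ring] at h0
    have h0' : μ[fun ω => ξ0 (T ((n:ℤ) + 1) ω)|ℱ 0]
        =ᵐ[μ] ((μ[ξ0|ℱ (-(n:ℤ)-1)]) ∘ (T ((n:ℤ)+1))) := h0
    rw [eLpNorm_congr_ae h0']
    exact eLpNorm_comp_measurePreserving (g := μ[ξ0|ℱ (-(n:ℤ)-1)])
      (hMc _).aestronglyMeasurable (hTmp ((n:ℤ)+1))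
  have hstat3 : ∀ n : ℕ,
      eLpNorm (fun ω => ξ0 (T (-((n:ℤ) + 1)) ω)
        - (μ[fun ω' => ξ0 (T (-((n:ℤ) + 1)) ω')|ℱ 0]) ω) 2 μ
      = eLpNorm (fun ω => ξ0 ω - (μ[ξ0|ℱ ((n:ℤ)+1)]) ω) 2 μ := by
    intro n
    have h0 := hshift (-((n:ℤ)+1)) 0
    rw [show (0:ℤ) - (-((n:ℤ)+1)) = (n:ℤ)+1 by ring] at h0
    have hae : (fun ω => ξ0 (T (-((n:ℤ) + 1)) ω)
          - (μ[fun ω' => ξ0 (T (-((n:ℤ) + 1)) ω')|ℱ 0]) ω)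
        =ᵐ[μ] ((fun x => ξ0 x - (μ[ξ0|ℱ ((n:ℤ)+1)]) x) ∘ (T (-((n:ℤ)+1)))) := by
      filter_upwards [h0] with ω e0
      simp only [Function.comp_apply, e0]
    rw [eLpNorm_congr_ae hae]
    exact eLpNorm_comp_measurePreserving (g := fun x => ξ0 x - (μ[ξ0|ℱ ((n:ℤ)+1)]) x)
      ((hL2.sub (hMc _)).aestronglyMeasurable) (hTmp (-((n:ℤ)+1)))
  -- summability of the weighted A sequence
  have h1R : Summable (fun n : ℕ => ((n:ℝ)+1) ^ (-(1/2:ℝ)) * Real.log ((n:ℝ)+1) * A (n+1)) := by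
    have hs := ENNReal.summable_toReal h1.ne
    refine hs.congr ?_
    intro n
    rw [ENNReal.toReal_mul, ENNReal.toReal_mul]
    have hwt : (((n:ℝ≥0∞) + 1) ^ (-(1/2:ℝ))).toReal = ((n:ℝ)+1) ^ (-(1/2:ℝ)) := by
      rw [← ENNReal.toReal_rpow]
      congr 1
    have hlg : (ENNReal.ofReal (Real.log ((n:ℝ)+1))).toReal = Real.log ((n:ℝ)+1) :=
      ENNReal.toReal_ofReal (Real.log_nonneg (by
        have : (0:ℝ) ≤ (n:ℝ) := Nat.cast_nonneg n; linarith))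
    have hAn : (eLpNorm (μ[fun ω => ξ0 (T ((n:ℤ) + 1) ω)|ℱ 0]) 2 μ).toReal = A (n+1) := by
      rw [hstat2 n]
      have hidx : (-(n:ℤ)-1) = -(((n+1):ℕ):ℤ) := by push_cast; ring
      rw [hidx]
    rw [hwt, hlg, hAn]
  -- summability of the weighted B sequence (shifted)
  have h2R : Summable (fun n : ℕ => ((n:ℝ)+1) ^ (-(1/2:ℝ)) * Real.log ((n:ℝ)+1) * B (n+1)) := by
    have hs := ENNReal.summable_toReal h2.ne
    refine hs.congr ?_
    intro n
    rw [ENNReal.toReal_mul, ENNReal.toReal_mul]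
    have hwt : (((n:ℝ≥0∞) + 1) ^ (-(1/2:ℝ))).toReal = ((n:ℝ)+1) ^ (-(1/2:ℝ)) := by
      rw [← ENNReal.toReal_rpow]
      congr 1
    have hlg : (ENNReal.ofReal (Real.log ((n:ℝ)+1))).toReal = Real.log ((n:ℝ)+1) :=
      ENNReal.toReal_ofReal (Real.log_nonneg (by
        have : (0:ℝ) ≤ (n:ℝ) := Nat.cast_nonneg n; linarith))
    have hBn : (eLpNorm (fun ω => ξ0 (T (-((n:ℤ) + 1)) ω)
        - (μ[fun ω' => ξ0 (T (-((n:ℤ) + 1)) ω')|ℱ 0]) ω) 2 μ).toReal = B (n+1) := by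
      rw [hstat3 n]
      have hidx : ((n:ℤ)+1) = (((n+1):ℕ):ℤ) := by push_cast; ring
      rw [hidx]
    rw [hwt, hlg, hBn]
  have hwB : Summable (fun n : ℕ => ((n:ℝ)+1) ^ (-(1/2:ℝ)) * Real.log ((n:ℝ)+1) * B n) := by
    rw [← summable_nat_add_iff 2]
    have hcomp : Summable (fun n : ℕ =>
        2 * ((((n+1:ℕ):ℝ)+1) ^ (-(1/2:ℝ)) * Real.log (((n+1:ℕ):ℝ)+1) * B ((n+1)+1))) :=
      ((summable_nat_add_iff 1).mpr h2R).mul_left 2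
    refine Summable.of_nonneg_of_le (fun n => ?_) (fun n => ?_) hcomp
    · have h5 : 0 ≤ Real.log (((n+2:ℕ):ℝ)+1) := Real.log_nonneg (by
        have : (0:ℝ) ≤ ((n+2:ℕ):ℝ) := Nat.cast_nonneg _; linarith)
      exact mul_nonneg (mul_nonneg (Real.rpow_nonneg (by positivity) _) h5) (hB0 _)
    · have e1 : ((n+2:ℕ):ℝ) + 1 = (n:ℝ)+3 := by push_cast; ring
      have e2 : ((n+1:ℕ):ℝ) + 1 = (n:ℝ)+2 := by push_cast; ring
      rw [e1, e2]
      have h3 : (0:ℝ) ≤ B (n+2) := hB0 _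
      have hx : (0:ℝ) < ((n:ℝ)+2) := by positivity
      have hr1 : (((n:ℝ)+3)) ^ (-(1/2:ℝ)) ≤ (((n:ℝ)+2)) ^ (-(1/2:ℝ)) := by
        rw [Real.rpow_neg (by positivity), Real.rpow_neg (by positivity)]
        apply inv_anti₀ (Real.rpow_pos_of_pos hx _)
        exact Real.rpow_le_rpow (by positivity) (by linarith) (by norm_num)
      have hr2 : Real.log ((n:ℝ)+3) ≤ 2 * Real.log ((n:ℝ)+2) := by
        rw [show (2:ℝ) * Real.log ((n:ℝ)+2) = Real.log (((n:ℝ)+2)^2) by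
          rw [Real.log_pow]; norm_num]
        apply Real.log_le_log (by positivity)
        nlinarith
      have h4 : (0:ℝ) ≤ (((n:ℝ)+2)) ^ (-(1/2:ℝ)) := Real.rpow_nonneg (by positivity) _
      have h5 : (0:ℝ) ≤ Real.log ((n:ℝ)+3) := Real.log_nonneg (by linarith)
      have h6 : (0:ℝ) ≤ Real.log ((n:ℝ)+2) := Real.log_nonneg (by linarith)
      calc ((n:ℝ)+3) ^ (-(1/2:ℝ)) * Real.log ((n:ℝ)+3) * B (n+2)
          ≤ (((n:ℝ)+2) ^ (-(1/2:ℝ)) * (2 * Real.log ((n:ℝ)+2))) * B (n+2) := by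
            apply mul_le_mul _ le_rfl h3 (mul_nonneg h4 (by linarith))
            exact mul_le_mul hr1 hr2 h5 h4
        _ = 2 * (((n:ℝ)+2) ^ (-(1/2:ℝ)) * Real.log ((n:ℝ)+2) * B ((n+1)+1)) := by
            ring
  -- apply the series lemma
  have hvS1 : Summable (fun k : ℕ => Real.log (2 + (k:ℝ)) * v (-(k:ℤ)-1)) :=
    series_lemma (fun k => hv0 _) (fun n => hA0 _) htail_neg h1R
  have hvS2 : Summable (fun k : ℕ => Real.log (2 + (k:ℝ)) * v ((k:ℤ)+1)) :=
    series_lemma (fun k => hv0 _) hB0 htail_pos hwB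
  -- rewrite the goal termwise
  have hterm : ∀ j : ℤ, ENNReal.ofReal (Real.log (1 + |j|))
        * eLpNorm (Pproj μ ℱ 0 (fun ω => ξ0 (T j ω))) 2 μ
      = ENNReal.ofReal (Real.log (1 + |j|) * v (-j)) := by
    intro j
    rw [hstat1 j]
    rw [ENNReal.ofReal_mul (Real.log_nonneg (by
      have : (0:ℝ) ≤ ((|j| : ℤ) : ℝ) := by exact_mod_cast abs_nonneg j
      linarith))]
    congr 1
    exact (ENNReal.ofReal_toReal (hMP (-j)).2.ne).symm
  rw [tsum_congr hterm]
  -- split the integer sum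
  set Gp : ℕ → ℝ≥0∞ := fun n =>
    ENNReal.ofReal (Real.log (1 + |((n:ℕ):ℤ)|) * v (-((n:ℕ):ℤ))) with hGp
  set Gn : ℕ → ℝ≥0∞ := fun n =>
    ENNReal.ofReal (Real.log (1 + |(Int.negSucc n)|) * v (-(Int.negSucc n))) with hGn
  have hsplit : (fun j : ℤ => ENNReal.ofReal (Real.log (1 + |j|) * v (-j)))
      = fun j : ℤ => Int.rec Gp Gn j := by
    funext j
    cases j with
    | ofNat n => rfl
    | negSucc n => rfl
  rw [hsplit, tsum_int_rec ENNReal.summable ENNReal.summable]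
  -- positive part
  have hposR : Summable (fun n : ℕ => Real.log (1 + |((n:ℕ):ℤ)|) * v (-((n:ℕ):ℤ))) := by
    rw [← summable_nat_add_iff 1]
    refine hvS1.congr fun n => ?_
    have e1 : Real.log (2 + (n:ℝ)) = Real.log (1 + |(((n+1:ℕ)):ℤ)|) := by
      congr 1
      have : |((n+1:ℕ):ℤ)| = ((n+1:ℕ):ℤ) := abs_of_nonneg (by positivity)
      rw [this]
      push_cast
      ring
    have e2 : (-(n:ℤ)-1) = -((((n+1):ℕ)):ℤ) := by push_cast; ring
    rw [e1, e2]
  have hposnn : ∀ n : ℕ, 0 ≤ Real.log (1 + |((n:ℕ):ℤ)|) * v (-((n:ℕ):ℤ)) := by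
    intro n
    apply mul_nonneg _ (hv0 _)
    apply Real.log_nonneg
    have : (0:ℝ) ≤ ((|(n:ℤ)| : ℤ) : ℝ) := by exact_mod_cast abs_nonneg ((n:ℕ):ℤ)
    linarith
  have hpfin : (∑' n : ℕ, Gp n) < ⊤ := by
    rw [hGp, ← ENNReal.ofReal_tsum_of_nonneg hposnn hposR]
    exact ENNReal.ofReal_lt_top
  -- negative part
  have hnegR : Summable (fun n : ℕ => Real.log (1 + |(Int.negSucc n)|) * v (-(Int.negSucc n))) := by
    refine hvS2.congr fun n => ?_
    have ha : |(Int.negSucc n)| = ((n+1:ℕ):ℤ) := by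
      rw [Int.negSucc_eq]
      rw [abs_of_nonpos (by omega)]
      push_cast
      ring
    have hb : -(Int.negSucc n) = (n:ℤ)+1 := by
      rw [Int.negSucc_eq]; ring
    have e1 : Real.log (2 + (n:ℝ)) = Real.log (1 + |(Int.negSucc n)|) := by
      congr 1
      rw [ha]
      push_cast
      ring
    rw [e1, hb]
  have hnegnn : ∀ n : ℕ, 0 ≤ Real.log (1 + |(Int.negSucc n)|) * v (-(Int.negSucc n)) := by
    intro n
    apply mul_nonneg _ (hv0 _)
    apply Real.log_nonneg
    have : (0:ℝ) ≤ ((|Int.negSucc n| : ℤ) : ℝ) := by exact_mod_cast abs_nonneg (Int.negSucc n)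
    linarith
  have hnfin : (∑' n : ℕ, Gn n) < ⊤ := by
    rw [hGn, ← ENNReal.ofReal_tsum_of_nonneg hnegnn hnegR]
    exact ENNReal.ofReal_lt_top
  exact ENNReal.add_lt_top.mpr ⟨hpfin, hnfin⟩
end

section
/- Let $m \ge 1$ and let $(\xi_k)$ be stationary with $\sum_{j\in\mathbb{Z}} \|P_0(\xi_j)\|_2 < \infty$, and set $d_0 = \sum_{k\in\mathbb{Z}} P_0(\xi_k)$ (convergent in $L^2$) and $\theta_{0,m} = \sum_{k=0}^{2m-2} \sum_{i=k-m+1}^{m-1} P_i(\xi_k)$. Then the identity $\xi_0 - d_0 = d_0 \circ T^m - d_0 + \theta_{0,m} - \theta_{0,m}\circ T + \sum_{|i|\ge m} P_i(\xi_0) - \big( \sum_{|k|\ge m} P_0(\xi_k) \big) \circ T^m$ holds in $L^2$. -/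
open MeasureTheory Filter
open scoped ENNReal Topology

private lemma tele_aux (g : ℤ → ℝ) (a : ℤ) : ∀ b : ℤ, a - 1 ≤ b →
    ∑ i ∈ Finset.Icc a b, (g i - g (i + 1)) = g a - g (b + 1) := by
  intro b hb
  refine Int.le_induction (motive := fun b _ => ∑ i ∈ Finset.Icc a b, (g i - g (i + 1)) = g a - g (b + 1)) ?_ ?_ b hb
  · rw [Finset.Icc_eq_empty (by omega)]
    simp
  · intro n hn ih
    show ∑ i ∈ Finset.Icc a (n+1), (g i - g (i + 1)) = g a - g (n+1+1)
    rw [show Finset.Icc a (n + 1) = insert (n + 1) (Finset.Icc a n) by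
        ext x; simp only [Finset.mem_insert, Finset.mem_Icc]; omega,
      Finset.sum_insert (by simp only [Finset.mem_Icc]; omega), ih]
    ring

private lemma tsum_split_abs (f : ℤ → ℝ) (hf : Summable f) (m : ℕ) (hm : 1 ≤ m) :
    (∑' i : ℤ, if (m : ℤ) ≤ |i| then f i else 0)
      = (∑' i, f i) - ∑ i ∈ Finset.Icc (1 - (m : ℤ)) ((m : ℤ) - 1), f i := by
  have habs : ∀ i : ℤ, ((m : ℤ) ≤ |i|) ↔ ¬ (1 - (m:ℤ) ≤ i ∧ i ≤ (m:ℤ) - 1) := by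
    intro i
    rcases le_or_gt 0 i with h | h
    · rw [abs_of_nonneg h]; omega
    · rw [abs_of_neg h]; omega
  have h1 : Summable (fun i : ℤ => if (m : ℤ) ≤ |i| then f i else 0) := by
    have := hf.indicator {i : ℤ | (m : ℤ) ≤ |i|}
    refine this.congr fun i => ?_
    simp [Set.indicator_apply, Set.mem_setOf_eq]
  have h2 : Summable (fun i : ℤ => if (m : ℤ) ≤ |i| then 0 else f i) := by
    refine (hf.sub h1).congr fun i => ?_
    by_cases h : (m : ℤ) ≤ |i| <;> simp [h]
  have hadd : (∑' i, f i) = (∑' i : ℤ, if (m : ℤ) ≤ |i| then f i else 0)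
      + ∑' i : ℤ, if (m : ℤ) ≤ |i| then 0 else f i := by
    rw [← Summable.tsum_add h1 h2]
    refine tsum_congr fun i => ?_
    by_cases h : (m : ℤ) ≤ |i| <;> simp [h]
  have hfin : (∑' i : ℤ, if (m : ℤ) ≤ |i| then 0 else f i)
      = ∑ i ∈ Finset.Icc (1 - (m : ℤ)) ((m : ℤ) - 1), f i := by
    rw [tsum_eq_sum (s := Finset.Icc (1 - (m:ℤ)) ((m:ℤ) - 1))]
    · refine Finset.sum_congr rfl fun i hi => ?_
      rw [Finset.mem_Icc] at hi
      rw [if_neg]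
      rw [habs]; exact fun h => h hi
    · intro i hi
      rw [Finset.mem_Icc] at hi
      rw [if_pos ((habs i).2 hi)]
  rw [hadd, hfin]; ring

private lemma range_to_Icc (n : ℕ) (f : ℤ → ℝ) :
    ∑ k ∈ Finset.range n, f (k : ℤ) = ∑ k ∈ Finset.Icc (0 : ℤ) ((n : ℤ) - 1), f k := by
  refine Finset.sum_nbij' (fun k => (k : ℤ)) (fun k => k.toNat) ?_ ?_ ?_ ?_ ?_
  · intro a ha; rw [Finset.mem_range] at ha; rw [Finset.mem_Icc]; omega
  · intro a ha; rw [Finset.mem_Icc] at ha; rw [Finset.mem_range]; omega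
  · intro a _; omega
  · intro a ha; rw [Finset.mem_Icc] at ha; omega
  · intro a _; rfl

private lemma sum_neg_Icc (m : ℕ) (f : ℤ → ℝ) :
    ∑ i ∈ Finset.Icc (1 - (m : ℤ)) ((m : ℤ) - 1), f (-i)
      = ∑ j ∈ Finset.Icc (1 - (m : ℤ)) ((m : ℤ) - 1), f j := by
  refine Finset.sum_nbij' (fun i => -i) (fun j => -j) ?_ ?_ ?_ ?_ ?_
  · intro a ha; rw [Finset.mem_Icc] at *; omega
  · intro a ha; rw [Finset.mem_Icc] at *; omega
  · intro a _; omega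
  · intro a _; omega
  · intro a _; rfl

private lemma diag_reindex (m : ℕ) (hm : 1 ≤ m) (G : ℤ → ℤ → ℝ) :
    ∑ k ∈ Finset.range (2 * m - 1), ∑ i ∈ Finset.Icc ((k : ℤ) - (m : ℤ) + 1) ((m : ℤ) - 1),
        G ((k : ℤ) - i) i
      = ∑ j ∈ Finset.Icc (1 - (m : ℤ)) ((m : ℤ) - 1), ∑ i ∈ Finset.Icc (-j) ((m : ℤ) - 1), G j i := by
  rw [range_to_Icc (2 * m - 1) (fun k => ∑ i ∈ Finset.Icc (k - (m : ℤ) + 1) ((m : ℤ) - 1), G (k - i) i)]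
  rw [Finset.sum_sigma', Finset.sum_sigma']
  refine Finset.sum_nbij' (fun p => ⟨p.1 - p.2, p.2⟩) (fun p => ⟨p.1 + p.2, p.2⟩) ?_ ?_ ?_ ?_ ?_
  · rintro ⟨k, i⟩ h
    simp only [Finset.mem_sigma, Finset.mem_Icc] at *
    omega
  · rintro ⟨j, i⟩ h
    simp only [Finset.mem_sigma, Finset.mem_Icc] at *
    omega
  · rintro ⟨k, i⟩ _; dsimp only; exact Sigma.ext (by dsimp only; omega) (heq_of_eq rfl)
  · rintro ⟨j, i⟩ _; dsimp only; exact Sigma.ext (by dsimp only; omega) (heq_of_eq rfl)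
  · rintro ⟨k, i⟩ _; rfl



private lemma Temb {Ω : Type*} {m0 : MeasurableSpace Ω} {μ : Measure Ω}
    {T : ℤ → Ω → Ω} (hT0 : T 0 = id) (hTadd : ∀ i j : ℤ, ∀ ω, T (i + j) ω = T i (T j ω))
    (hTmp : ∀ i, MeasurePreserving (T i) μ μ) (j : ℤ) : MeasurableEmbedding (T j) := by
  have h1 : ∀ ω, T (-j) (T j ω) = ω := fun ω => by
    rw [← hTadd, neg_add_cancel, hT0]; rfl
  have h2 : ∀ ω, T j (T (-j) ω) = ω := fun ω => by
    rw [← hTadd, add_neg_cancel, hT0]; rfl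
  exact (MeasurableEquiv.mk ⟨T j, T (-j), h1, h2⟩ (hTmp j).measurable
    (hTmp (-j)).measurable).measurableEmbedding

private lemma condexp_comp {Ω : Type*} (𝒢 : MeasurableSpace Ω)
    {m0 : MeasurableSpace Ω} {μ : Measure Ω}
    [IsProbabilityMeasure μ]
    {T : ℤ → Ω → Ω} (hT0 : T 0 = id) (hTadd : ∀ i j : ℤ, ∀ ω, T (i + j) ω = T i (T j ω))
    (hTmp : ∀ i, MeasurePreserving (T i) μ μ)
    (j : ℤ) (h𝒢 : 𝒢 ≤ m0)
    (g : Ω → ℝ) (hg : Integrable g μ) :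
    (fun ω => (μ[g|𝒢]) (T j ω)) =ᵐ[μ] μ[(fun ω => g (T j ω)) | 𝒢.comap (T j)] := by
  have hle : 𝒢.comap (T j) ≤ m0 := by
    rintro s ⟨t, ht, rfl⟩
    exact (hTmp j).measurable (h𝒢 t ht)
  have hgc : Integrable (fun ω => g (T j ω)) μ :=
    ((hTmp j).integrable_comp hg.aestronglyMeasurable).mpr hg
  have hgc' : Integrable (fun ω => (μ[g|𝒢]) (T j ω)) μ :=
    ((hTmp j).integrable_comp
      ((stronglyMeasurable_condExp (m := 𝒢)).mono h𝒢).aestronglyMeasurable).mpr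
      integrable_condExp
  refine ae_eq_condExp_of_forall_setIntegral_eq hle hgc
    (fun s _ _ => hgc'.integrableOn) ?_ ?_
  · rintro s ⟨t, ht, rfl⟩ _
    have e1 := (hTmp j).setIntegral_preimage_emb (Temb hT0 hTadd hTmp j) (μ[g|𝒢]) t
    have e2 := (hTmp j).setIntegral_preimage_emb (Temb hT0 hTadd hTmp j) g t
    rw [show T j ⁻¹' t = (fun a => T j a) ⁻¹' t from rfl]
    rw [e1, e2, setIntegral_condExp h𝒢 hg ht]
  · exact ((stronglyMeasurable_condExp (m := 𝒢)).comp_measurable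
      (measurable_iff_comap_le.2 le_rfl)).aestronglyMeasurable

private lemma Pproj_stat {Ω : Type*} {F0 : MeasurableSpace Ω}
    {m0 : MeasurableSpace Ω} {μ : Measure Ω}
    [IsProbabilityMeasure μ]
    {T : ℤ → Ω → Ω} (hT0 : T 0 = id) (hTadd : ∀ i j : ℤ, ∀ ω, T (i + j) ω = T i (T j ω))
    (hTmp : ∀ i, MeasurePreserving (T i) μ μ)
    {ℱ : ℤ → MeasurableSpace Ω}
    (hℱdef : ∀ i, ℱ i = MeasurableSpace.comap (T i) F0) (hℱle : ∀ i, ℱ i ≤ m0)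
    (ξ0 : Ω → ℝ) (hξi : Integrable ξ0 μ) (hξsm : AEStronglyMeasurable ξ0 μ) (j k : ℤ) :
    Pproj μ ℱ j (fun ω => ξ0 (T k ω))
      =ᵐ[μ] fun x => Pproj μ ℱ 0 (fun ω => ξ0 (T (k - j) ω)) (T j x) := by
  have hcom : ∀ a : ℤ, ℱ (a + j) = (ℱ a).comap (T j) := by
    intro a
    rw [hℱdef (a + j), hℱdef a, MeasurableSpace.comap_comp]
    congr 1
    exact funext fun ω => hTadd a j ω
  have hfun : (fun ω => ξ0 (T k ω)) = fun x => ξ0 (T (k - j) (T j x)) :=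
    funext fun ω => by rw [← hTadd, sub_add_cancel]
  have hint : Integrable (fun ω => ξ0 (T (k - j) ω)) μ :=
    ((hTmp (k - j)).integrable_comp hξsm).mpr hξi
  have h1 := condexp_comp (ℱ 0) hT0 hTadd hTmp j (hℱle 0) _ hint
  have h2 := condexp_comp (ℱ (-1)) hT0 hTadd hTmp j (hℱle (-1)) _ hint
  rw [← hcom 0, zero_add, ← hfun] at h1
  rw [← hcom (-1), show (-1 : ℤ) + j = j - 1 by ring, ← hfun] at h2
  filter_upwards [h1, h2] with x e1 e2
  simp only [Pproj, Pi.sub_apply, show (0:ℤ) - 1 = -1 from rfl, ← e1, ← e2]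

private lemma ae_summable {Ω : Type*} {m0 : MeasurableSpace Ω} (μ : Measure Ω)
    [IsProbabilityMeasure μ] (f : ℤ → Ω → ℝ)
    (hmeas : ∀ i, AEStronglyMeasurable (f i) μ) (hs : (∑' i : ℤ, eLpNorm (f i) 1 μ) ≠ ∞) :
    ∀ᵐ ω ∂μ, Summable fun i => f i ω := by
  have h : ∫⁻ ω, ∑' i, (‖f i ω‖₊ : ℝ≥0∞) ∂μ ≠ ∞ := by
    rw [lintegral_tsum fun i => (hmeas i).aemeasurable.nnnorm.coe_nnreal_ennreal]
    simpa [eLpNorm_one_eq_lintegral_enorm, enorm_eq_nnnorm] using hs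
  filter_upwards [ae_lt_top' (AEMeasurable.ennreal_tsum fun i => (hmeas i).aemeasurable.nnnorm.coe_nnreal_ennreal) h] with ω hω
  exact Summable.of_nnnorm (ENNReal.tsum_coe_ne_top_iff_summable.mp hω.ne)



private lemma tele_aux2 (g : ℤ → ℝ) (a : ℤ) : ∀ b : ℤ, a - 1 ≤ b →
    ∑ i ∈ Finset.Icc a b, (g i - g (i - 1)) = g b - g (a - 1) := by
  intro b hb
  refine Int.le_induction (motive := fun b _ => ∑ i ∈ Finset.Icc a b, (g i - g (i - 1)) = g b - g (a - 1))
    ?_ ?_ b hb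
  · rw [Finset.Icc_eq_empty (by omega)]
    simp
  · intro n hn ih
    show ∑ i ∈ Finset.Icc a (n + 1), (g i - g (i - 1)) = g (n + 1) - g (a - 1)
    rw [show Finset.Icc a (n + 1) = insert (n + 1) (Finset.Icc a n) by
        ext x; simp only [Finset.mem_insert, Finset.mem_Icc]; omega,
      Finset.sum_insert (by simp only [Finset.mem_Icc]; omega), ih]
    rw [show n + 1 - 1 = n by ring]
    ring

private lemma sum_Icc_neg_range (n : ℕ) (f : ℤ → ℝ) :
    ∑ i ∈ Finset.Icc (1 - (n : ℤ)) 0, f i = ∑ j ∈ Finset.range n, f (-(j : ℤ)) := by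
  refine Finset.sum_nbij' (fun i => (-i).toNat) (fun j => -(j : ℤ)) ?_ ?_ ?_ ?_ ?_
  · intro a ha; rw [Finset.mem_Icc] at ha; rw [Finset.mem_range]; omega
  · intro a ha; rw [Finset.mem_range] at ha; rw [Finset.mem_Icc]; omega
  · intro a ha; rw [Finset.mem_Icc] at ha; omega
  · intro a _; omega
  · intro a ha; rw [Finset.mem_Icc] at ha
    rw [show (((-a).toNat : ℤ)) = -a by omega, neg_neg]

private lemma levy_up {Ω : Type*} {m0 : MeasurableSpace Ω} {μ : Measure Ω}
    [IsProbabilityMeasure μ]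
    {ℱ : ℤ → MeasurableSpace Ω} (hℱmono : Monotone ℱ) (hℱle : ∀ i, ℱ i ≤ m0)
    (ξ0 : Ω → ℝ) (hξi : Integrable ξ0 μ)
    (hmeas : StronglyMeasurable[⨆ i : ℤ, ℱ i] ξ0) :
    ∀ᵐ ω ∂μ, Tendsto (fun n : ℕ => (μ[ξ0|ℱ (n : ℤ)]) ω) atTop (𝓝 (ξ0 ω)) := by
  have hsupeq : (⨆ n : ℕ, ℱ (n : ℤ)) = ⨆ i : ℤ, ℱ i := by
    refine le_antisymm (iSup_le fun n => le_iSup ℱ ((n : ℤ))) (iSup_le fun i => ?_)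
    exact (hℱmono (Int.self_le_toNat i)).trans (le_iSup (fun n : ℕ => ℱ (n : ℤ)) i.toNat)
  have h𝒜 : (⨆ n : ℕ, (⟨fun n => ℱ (n : ℤ), fun i j hij => hℱmono (by exact_mod_cast hij),
      fun n => hℱle _⟩ : Filtration ℕ m0) n) = ⨆ i : ℤ, ℱ i := hsupeq
  exact Integrable.tendsto_ae_condExp
    (ℱ := ⟨fun n => ℱ (n : ℤ), fun i j hij => hℱmono (by exact_mod_cast hij), fun n => hℱle _⟩)
    hξi (h𝒜 ▸ hmeas)

private lemma regularity {Ω : Type*} {m0 : MeasurableSpace Ω} {μ : Measure Ω}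
    [IsProbabilityMeasure μ]
    {ℱ : ℤ → MeasurableSpace Ω} (hℱmono : Monotone ℱ) (hℱle : ∀ i, ℱ i ≤ m0)
    (ξ0 : Ω → ℝ) (hξi : Integrable ξ0 μ)
    (hreg : μ[ξ0 | ⨅ n : ℕ, ℱ (-(n : ℤ))] =ᵐ[μ] 0)
    (hmeas : StronglyMeasurable[⨆ i : ℤ, ℱ i] ξ0)
    (hQae : ∀ᵐ ω ∂μ, Summable fun i => Pproj μ ℱ i ξ0 ω)
    (hQ1 : (∑' i : ℤ, eLpNorm (Pproj μ ℱ i ξ0) 1 μ) ≠ ∞) :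
    ∀ᵐ ω ∂μ, (∑' i, Pproj μ ℱ i ξ0 ω) = ξ0 ω := by
  set Q : ℤ → Ω → ℝ := fun i => Pproj μ ℱ i ξ0 with hQdef
  have hQsm : ∀ i, StronglyMeasurable[m0] (Q i) := fun i =>
    ((stronglyMeasurable_condExp (m := ℱ i)).mono (hℱle i)).sub
      ((stronglyMeasurable_condExp (m := ℱ (i - 1))).mono (hℱle (i - 1)))
  -- upward
  have hup : ∀ᵐ ω ∂μ, Tendsto (fun n : ℕ => (μ[ξ0|ℱ (n : ℤ)]) ω) atTop (𝓝 (ξ0 ω)) :=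
    levy_up hℱmono hℱle ξ0 hξi hmeas
  -- downward
  set E : ℕ → Ω → ℝ := fun n => μ[ξ0|ℱ (-(n : ℤ))] with hE
  set 𝒢 : MeasurableSpace Ω := ⨅ n : ℕ, ℱ (-(n : ℤ)) with h𝒢def
  have h𝒢 : 𝒢 ≤ m0 := (iInf_le (fun n : ℕ => ℱ (-(n : ℤ))) 0).trans (hℱle _)
  set h : Ω → ℝ := fun ω => Filter.limsup (fun n => E n ω) atTop with hh
  have hmeasbk : ∀ k : ℕ, Measurable[ℱ (-(k : ℤ))] h := by
    intro k
    have heq : h = fun ω => Filter.limsup (fun n => E (n + k) ω) atTop := by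
      funext ω; exact (Filter.limsup_nat_add (fun n => E n ω) k).symm
    rw [heq]
    exact Measurable.limsup fun n =>
      ((stronglyMeasurable_condExp (m := ℱ (-(↑(n + k) : ℤ)))).mono
        (hℱmono (by push_cast; omega))).measurable
  have hmeas𝒢 : StronglyMeasurable[𝒢] h :=
    (show Measurable[𝒢] h from measurable_iff_comap_le.mpr
      (le_iInf fun k => measurable_iff_comap_le.mp (hmeasbk k))).stronglyMeasurable
  have hinj : Function.Injective (fun j : ℕ => -(j : ℤ)) := by
    intro a b hab; simp only at hab; omega
  -- formula for E n
  have hEformula : ∀ n ω, E n ω = E 0 ω - ∑ j ∈ Finset.range n, Q (-(j : ℤ)) ω := by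
    intro n ω
    have ht := tele_aux2 (fun i => (μ[ξ0|ℱ i]) ω) (1 - (n : ℤ)) 0 (by omega)
    have hsum : ∑ i ∈ Finset.Icc (1 - (n : ℤ)) 0, Q i ω
        = ∑ j ∈ Finset.range n, Q (-(j : ℤ)) ω := sum_Icc_neg_range n (fun i => Q i ω)
    rw [← hsum]
    have : ∑ i ∈ Finset.Icc (1 - (n : ℤ)) 0, Q i ω
        = (μ[ξ0|ℱ 0]) ω - (μ[ξ0|ℱ (1 - (n : ℤ) - 1)]) ω := ht
    rw [this, show (1 - (n : ℤ) - 1) = -(n : ℤ) by ring]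
    simp only [hE, Int.natCast_zero, neg_zero]
    ring
  -- tendsto h
  have htend : ∀ᵐ ω ∂μ, Tendsto (fun n => E n ω) atTop (𝓝 (h ω))
      ∧ h ω = E 0 ω - ∑' j : ℕ, Q (-(j : ℤ)) ω := by
    filter_upwards [hQae] with ω hs
    have hs' : Summable fun j : ℕ => Q (-(j : ℤ)) ω :=
      (hs.comp_injective hinj : _)
    have hten : Tendsto (fun n => E n ω) atTop (𝓝 (E 0 ω - ∑' j : ℕ, Q (-(j : ℤ)) ω)) := by
      have := (hs'.hasSum.tendsto_sum_nat).const_sub (E 0 ω)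
      refine this.congr fun n => ?_
      exact (hEformula n ω).symm
    have hlim : h ω = E 0 ω - ∑' j : ℕ, Q (-(j : ℤ)) ω := Filter.Tendsto.limsup_eq hten
    exact ⟨hlim ▸ hten, hlim⟩
  -- tail bound
  have hQ1' : (∑' j : ℕ, eLpNorm (Q (-(j : ℤ))) 1 μ) ≠ ∞ := by
    refine ne_top_of_le_ne_top hQ1 ?_
    exact ENNReal.tsum_comp_le_tsum_of_injective hinj (fun i => eLpNorm (Q i) 1 μ)
  have htail : ∀ n : ℕ, eLpNorm (h - E n) 1 μ ≤ ∑' j : ℕ, eLpNorm (Q (-((j + n : ℕ) : ℤ))) 1 μ := by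
    intro n
    have hbd : ∀ᵐ ω ∂μ, (‖(h - E n) ω‖₊ : ℝ≥0∞)
        ≤ ∑' j : ℕ, (‖Q (-((j + n : ℕ) : ℤ)) ω‖₊ : ℝ≥0∞) := by
      filter_upwards [hQae, htend] with ω hs hts
      have hs' : Summable fun j : ℕ => Q (-(j : ℤ)) ω := (hs.comp_injective hinj : _)
      have hsplit : ∑' j : ℕ, Q (-(j : ℤ)) ω
          = (∑ j ∈ Finset.range n, Q (-(j : ℤ)) ω) + ∑' j : ℕ, Q (-((j + n : ℕ) : ℤ)) ω :=
        (Summable.sum_add_tsum_nat_add n hs').symm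
      have hval : (h - E n) ω = -(∑' j : ℕ, Q (-((j + n : ℕ) : ℤ)) ω) := by
        simp only [Pi.sub_apply]
        rw [hts.2, hEformula n ω, hsplit]
        ring
      rw [hval]
      have hsn : Summable fun j : ℕ => Q (-((j + n : ℕ) : ℤ)) ω :=
        (hs'.comp_injective (add_left_injective n) : _)
      have habs : Summable fun j : ℕ => ‖Q (-((j + n : ℕ) : ℤ)) ω‖₊ := by
        rw [← NNReal.summable_coe]
        exact hsn.abs.congr fun j => by rw [coe_nnnorm, Real.norm_eq_abs]
      rw [nnnorm_neg, ← ENNReal.coe_tsum habs]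
      exact ENNReal.coe_le_coe.mpr (nnnorm_tsum_le habs)
    calc eLpNorm (h - E n) 1 μ = ∫⁻ ω, (‖(h - E n) ω‖₊ : ℝ≥0∞) ∂μ :=
          eLpNorm_one_eq_lintegral_enorm
      _ ≤ ∫⁻ ω, ∑' j : ℕ, (‖Q (-((j + n : ℕ) : ℤ)) ω‖₊ : ℝ≥0∞) ∂μ := lintegral_mono_ae hbd
      _ = ∑' j : ℕ, ∫⁻ ω, (‖Q (-((j + n : ℕ) : ℤ)) ω‖₊ : ℝ≥0∞) ∂μ :=
          lintegral_tsum fun j => (hQsm _).aestronglyMeasurable.enorm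
      _ = ∑' j : ℕ, eLpNorm (Q (-((j + n : ℕ) : ℤ))) 1 μ := by
          refine tsum_congr fun j => ?_
          simp only [eLpNorm_one_eq_lintegral_enorm, enorm_eq_nnnorm]
  have hδ0 : Tendsto (fun n : ℕ => ∑' j : ℕ, eLpNorm (Q (-((j + n : ℕ) : ℤ))) 1 μ) atTop (𝓝 0) :=
    ENNReal.tendsto_sum_nat_add (fun j : ℕ => eLpNorm (Q (-(j : ℤ))) 1 μ) hQ1'
  -- h integrable
  have hsm0 : StronglyMeasurable[m0] h := hmeas𝒢.mono h𝒢
  have hInth : Integrable h μ := by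
    have hEint : Integrable (E 0) μ := integrable_condExp
    have hlt : eLpNorm h 1 μ < ∞ := by
      have hhh : h = (h - E 0) + E 0 := by funext ω; simp
      calc eLpNorm h 1 μ = eLpNorm ((h - E 0) + E 0) 1 μ := by rw [← hhh]
        _ ≤ eLpNorm (h - E 0) 1 μ + eLpNorm (E 0) 1 μ :=
            eLpNorm_add_le (hsm0.aestronglyMeasurable.sub
              (stronglyMeasurable_condExp.mono (hℱle _)).aestronglyMeasurable)
              (stronglyMeasurable_condExp.mono (hℱle _)).aestronglyMeasurable le_rfl
        _ < ∞ := by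
            have h1 : eLpNorm (h - E 0) 1 μ < ∞ := by
              have h0 : (∑' j : ℕ, eLpNorm (Q (-((j + 0 : ℕ) : ℤ))) 1 μ)
                  = ∑' j : ℕ, eLpNorm (Q (-(j : ℤ))) 1 μ := by simp
              exact lt_of_le_of_lt (htail 0) (h0 ▸ lt_top_iff_ne_top.mpr hQ1')
            have h2 : eLpNorm (E 0) 1 μ < ∞ := (memLp_one_iff_integrable.mpr hEint).2
            exact ENNReal.add_lt_top.mpr ⟨h1, h2⟩
    exact memLp_one_iff_integrable.mp ⟨hsm0.aestronglyMeasurable, hlt⟩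
  -- condexp of h at 𝒢 is h
  have hcondh : μ[h|𝒢] = h := condExp_of_stronglyMeasurable h𝒢 hmeas𝒢 hInth
  -- condexp of h at 𝒢 is 0
  have hzero : h =ᵐ[μ] 0 := by
    have hbound : ∀ n : ℕ, eLpNorm (μ[h|𝒢]) 1 μ
        ≤ ∑' j : ℕ, eLpNorm (Q (-((j + n : ℕ) : ℤ))) 1 μ := by
      intro n
      have hEint : Integrable (E n) μ := integrable_condExp
      have e1 : μ[h|𝒢] =ᵐ[μ] μ[h - E n|𝒢] + μ[E n|𝒢] := by
        have : h = (h - E n) + E n := by funext ω; simp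
        nth_rewrite 1 [this]
        exact condExp_add (hInth.sub hEint) hEint 𝒢
      have e2 : μ[E n|𝒢] =ᵐ[μ] 0 := by
        refine (condExp_condExp_of_le ?_ (hℱle _)).trans hreg
        exact iInf_le (fun n : ℕ => ℱ (-(n : ℤ))) n
      have e3 : μ[h|𝒢] =ᵐ[μ] μ[h - E n|𝒢] := by
        filter_upwards [e1, e2] with ω h1 h2
        simp only [h1, Pi.add_apply, h2, Pi.zero_apply, add_zero]
      calc eLpNorm (μ[h|𝒢]) 1 μ = eLpNorm (μ[h - E n|𝒢]) 1 μ := eLpNorm_congr_ae e3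
        _ ≤ eLpNorm (h - E n) 1 μ := eLpNorm_one_condExp_le_eLpNorm _
        _ ≤ _ := htail n
    have : eLpNorm (μ[h|𝒢]) 1 μ ≤ 0 := ge_of_tendsto hδ0 (Eventually.of_forall hbound)
    have hzz : eLpNorm (μ[h|𝒢]) 1 μ = 0 := le_antisymm this bot_le
    rw [hcondh] at hzz
    exact (eLpNorm_eq_zero_iff hsm0.aestronglyMeasurable one_ne_zero).mp hzz
  -- combine
  have hdown : ∀ᵐ ω ∂μ, Tendsto (fun n : ℕ => E n ω) atTop (𝓝 0) := by
    filter_upwards [htend, hzero] with ω ht hz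
    have h0 : h ω = 0 := hz
    exact h0 ▸ ht.1
  filter_upwards [hQae, hup, hdown] with ω hs hu hd
  have hIccten : Tendsto (fun n : ℕ => Finset.Icc (-(n : ℤ)) (n : ℤ)) atTop atTop := by
    refine tendsto_atTop_finset_of_monotone ?_ ?_
    · intro a b hab
      exact Finset.Icc_subset_Icc (by omega) (by exact_mod_cast hab)
    · intro i
      exact ⟨i.natAbs, by rw [Finset.mem_Icc]; omega⟩
  have h1 : Tendsto (fun n : ℕ => ∑ i ∈ Finset.Icc (-(n : ℤ)) (n : ℤ), Q i ω) atTop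
      (𝓝 (∑' i, Q i ω)) := hs.hasSum.comp hIccten
  have h2 : Tendsto (fun n : ℕ => ∑ i ∈ Finset.Icc (-(n : ℤ)) (n : ℤ), Q i ω) atTop
      (𝓝 (ξ0 ω)) := by
    have hform : ∀ n : ℕ, ∑ i ∈ Finset.Icc (-(n : ℤ)) (n : ℤ), Q i ω
        = (μ[ξ0|ℱ (n : ℤ)]) ω - E (n + 1) ω := by
      intro n
      have := tele_aux2 (fun i => (μ[ξ0|ℱ i]) ω) (-(n : ℤ)) (n : ℤ) (by omega)
      rw [show ∑ i ∈ Finset.Icc (-(n : ℤ)) (n : ℤ), Q i ω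
          = (μ[ξ0|ℱ (n : ℤ)]) ω - (μ[ξ0|ℱ (-(n : ℤ) - 1)]) ω from this]
      have : (-(n : ℤ) - 1) = -((n + 1 : ℕ) : ℤ) := by push_cast; ring
      rw [this]
    have := (hu.sub ((hd.comp (tendsto_add_atTop_nat 1))))
    rw [sub_zero] at this
    exact Tendsto.congr (fun n => (hform n).symm) this
  exact tendsto_nhds_unique h1 h2


private theorem stmt16_aux {Ω : Type*} (F0 : MeasurableSpace Ω)
    {m0 : MeasurableSpace Ω} (μ : Measure Ω) [IsProbabilityMeasure μ]
    (T : ℤ → Ω → Ω) (hT0 : T 0 = id) (hTadd : ∀ i j : ℤ, ∀ ω, T (i + j) ω = T i (T j ω))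
    (hTmp : ∀ i, MeasurePreserving (T i) μ μ)
    (ℱ : ℤ → MeasurableSpace Ω) (hℱdef : ∀ i, ℱ i = MeasurableSpace.comap (T i) F0)
    (hℱmono : Monotone ℱ) (hℱle : ∀ i, ℱ i ≤ m0)
    (ξ0 : Ω → ℝ)
    (hL2 : MeasureTheory.MemLp ξ0 2 μ)
    (hreg : μ[ξ0 | ⨅ n : ℕ, ℱ (-(n : ℤ))] =ᵐ[μ] 0)
    (hmeas : StronglyMeasurable[⨆ i : ℤ, ℱ i] ξ0)
    (hsum : ∑' j : ℤ, eLpNorm (Pproj μ ℱ 0 (fun ω => ξ0 (T j ω))) 2 μ < ⊤)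
    (m : ℕ) (hm : 1 ≤ m)
    (d0 : Ω → ℝ)
    (hd0 : ∀ ω, d0 ω = ∑' k : ℤ, Pproj μ ℱ 0 (fun ω' => ξ0 (T k ω')) ω)
    (θ : Ω → ℝ)
    (hθ : ∀ ω, θ ω = ∑ k ∈ Finset.range (2 * m - 1),
        ∑ i ∈ Finset.Icc ((k : ℤ) - (m : ℤ) + 1) ((m : ℤ) - 1),
          Pproj μ ℱ i (fun ω' => ξ0 (T (k : ℤ) ω')) ω) :
    (fun ω => ξ0 ω - d0 ω) =ᵐ[μ]
      (fun ω =>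
        d0 (T (m : ℤ) ω) - d0 ω + θ ω - θ (T 1 ω) +
          (∑' i : ℤ, if (m : ℤ) ≤ |i| then Pproj μ ℱ i ξ0 ω else 0) -
          ∑' k : ℤ, if (m : ℤ) ≤ |k|
            then Pproj μ ℱ 0 (fun ω' => ξ0 (T k ω')) (T (m : ℤ) ω) else 0) := by
  classical
  set S : ℤ → Ω → ℝ := fun k => Pproj μ ℱ 0 (fun ω' => ξ0 (T k ω')) with hS
  have hξsm0 : StronglyMeasurable[m0] ξ0 := hmeas.mono (iSup_le hℱle)
  have hξae : AEStronglyMeasurable ξ0 μ := hξsm0.aestronglyMeasurable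
  have hξi : Integrable ξ0 μ := hL2.integrable one_le_two
  have hξ0T0 : (fun ω => ξ0 (T 0 ω)) = ξ0 := funext fun ω => by rw [hT0]; rfl
  have hQS := fun (i k : ℤ) =>
    Pproj_stat hT0 hTadd hTmp hℱdef hℱle ξ0 hξi hξae i k
  have hQstat : ∀ i : ℤ, Pproj μ ℱ i ξ0 =ᵐ[μ] fun x => S (-i) (T i x) := by
    intro i
    have := hQS i 0
    rw [hξ0T0, zero_sub] at this
    exact this
  have hQsm : ∀ i, StronglyMeasurable[m0] (Pproj μ ℱ i ξ0) := fun i =>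
    ((stronglyMeasurable_condExp (m := ℱ i)).mono (hℱle i)).sub
      ((stronglyMeasurable_condExp (m := ℱ (i - 1))).mono (hℱle (i - 1)))
  have hSsm : ∀ k, StronglyMeasurable[m0] (S k) := fun k =>
    ((stronglyMeasurable_condExp (m := ℱ 0)).mono (hℱle 0)).sub
      ((stronglyMeasurable_condExp (m := ℱ (0 - 1))).mono (hℱle (0 - 1)))
  -- norm identities
  have hQ2 : ∀ i : ℤ, eLpNorm (Pproj μ ℱ i ξ0) 2 μ = eLpNorm (S (-i)) 2 μ := by
    intro i
    rw [eLpNorm_congr_ae (hQstat i)]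
    exact eLpNorm_comp_measurePreserving (hSsm (-i)).aestronglyMeasurable (hTmp i)
  have hQ2sum : (∑' i : ℤ, eLpNorm (Pproj μ ℱ i ξ0) 2 μ) ≠ ∞ := by
    have heq := (Equiv.neg ℤ).tsum_eq (fun k => eLpNorm (S k) 2 μ)
    simp only [Equiv.neg_apply] at heq
    rw [tsum_congr hQ2, heq]
    exact hsum.ne
  have h12 : ∀ f : Ω → ℝ, StronglyMeasurable[m0] f → eLpNorm f 1 μ ≤ eLpNorm f 2 μ := by
    intro f hf
    exact eLpNorm_le_eLpNorm_of_exponent_le (by norm_num) hf.aestronglyMeasurable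
  have hQ1sum : (∑' i : ℤ, eLpNorm (Pproj μ ℱ i ξ0) 1 μ) ≠ ∞ :=
    ne_top_of_le_ne_top hQ2sum (ENNReal.tsum_le_tsum fun i => h12 _ (hQsm i))
  have hS1sum : (∑' k : ℤ, eLpNorm (S k) 1 μ) ≠ ∞ :=
    ne_top_of_le_ne_top hsum.ne (ENNReal.tsum_le_tsum fun k => h12 _ (hSsm k))
  -- a.e. facts
  have hQae : ∀ᵐ ω ∂μ, Summable fun i => Pproj μ ℱ i ξ0 ω :=
    ae_summable μ _ (fun i => (hQsm i).aestronglyMeasurable) hQ1sum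
  have hSae : ∀ᵐ ω ∂μ, Summable fun k => S k ω :=
    ae_summable μ _ (fun k => (hSsm k).aestronglyMeasurable) hS1sum
  have hregae : ∀ᵐ ω ∂μ, (∑' i, Pproj μ ℱ i ξ0 ω) = ξ0 ω :=
    regularity hℱmono hℱle ξ0 hξi hreg hmeas hQae hQ1sum
  have haepull : ∀ (j : ℤ) (p : Ω → Prop), (∀ᵐ ω ∂μ, p ω) → ∀ᵐ ω ∂μ, p (T j ω) := by
    intro j p hp
    exact ((hTmp j).quasiMeasurePreserving.tendsto_ae).eventually hp
  have hstat_all : ∀ᵐ ω ∂μ, ∀ i k : ℤ,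
      Pproj μ ℱ i (fun ω' => ξ0 (T k ω')) ω = S (k - i) (T i ω) := by
    rw [ae_all_iff]
    intro i
    rw [ae_all_iff]
    intro k
    exact hQS i k
  have hstatT : ∀ᵐ ω ∂μ, ∀ i k : ℤ,
      Pproj μ ℱ i (fun ω' => ξ0 (T k ω')) (T 1 ω) = S (k - i) (T i (T 1 ω)) :=
    haepull 1 _ hstat_all
  have hSsumTm : ∀ᵐ ω ∂μ, Summable fun k => S k (T (m : ℤ) ω) :=
    haepull (m : ℤ) _ hSae
  -- final pointwise computation
  filter_upwards [hregae, hQae, hstat_all, hstatT, hSsumTm] with ω h1 h2 h3 h4 h5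
  have hQw : ∀ i : ℤ, Pproj μ ℱ i ξ0 ω = S (-i) (T i ω) := by
    intro i
    have := h3 i 0
    rw [hξ0T0, zero_sub] at this
    exact this
  have hA : (∑' i : ℤ, if (m : ℤ) ≤ |i| then Pproj μ ℱ i ξ0 ω else 0)
      = ξ0 ω - ∑ i ∈ Finset.Icc (1 - (m : ℤ)) ((m : ℤ) - 1), Pproj μ ℱ i ξ0 ω := by
    rw [tsum_split_abs _ h2 m hm, h1]
  have hB : (∑' k : ℤ, if (m : ℤ) ≤ |k| then S k (T (m : ℤ) ω) else 0)
      = d0 (T (m : ℤ) ω) - ∑ k ∈ Finset.Icc (1 - (m : ℤ)) ((m : ℤ) - 1), S k (T (m : ℤ) ω) := by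
    rw [tsum_split_abs _ h5 m hm, ← hd0 (T (m : ℤ) ω)]
  have hθ1 : θ ω = ∑ j ∈ Finset.Icc (1 - (m : ℤ)) ((m : ℤ) - 1),
      ∑ i ∈ Finset.Icc (-j) ((m : ℤ) - 1), S j (T i ω) := by
    rw [hθ ω, ← diag_reindex m hm (fun j i => S j (T i ω))]
    refine Finset.sum_congr rfl fun k _ => Finset.sum_congr rfl fun i _ => ?_
    exact h3 i (k : ℤ)
  have hθ2 : θ (T 1 ω) = ∑ j ∈ Finset.Icc (1 - (m : ℤ)) ((m : ℤ) - 1),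
      ∑ i ∈ Finset.Icc (-j) ((m : ℤ) - 1), S j (T (i + 1) ω) := by
    rw [hθ (T 1 ω), ← diag_reindex m hm (fun j i => S j (T (i + 1) ω))]
    refine Finset.sum_congr rfl fun k _ => Finset.sum_congr rfl fun i _ => ?_
    rw [h4 i (k : ℤ), ← hTadd i 1 ω]
  have htel : ∑ j ∈ Finset.Icc (1 - (m : ℤ)) ((m : ℤ) - 1),
        ∑ i ∈ Finset.Icc (-j) ((m : ℤ) - 1), S j (T i ω)
      - ∑ j ∈ Finset.Icc (1 - (m : ℤ)) ((m : ℤ) - 1),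
        ∑ i ∈ Finset.Icc (-j) ((m : ℤ) - 1), S j (T (i + 1) ω)
      = ∑ j ∈ Finset.Icc (1 - (m : ℤ)) ((m : ℤ) - 1), S j (T (-j) ω)
        - ∑ j ∈ Finset.Icc (1 - (m : ℤ)) ((m : ℤ) - 1), S j (T (m : ℤ) ω) := by
    rw [← Finset.sum_sub_distrib, ← Finset.sum_sub_distrib]
    refine Finset.sum_congr rfl fun j hj => ?_
    rw [← Finset.sum_sub_distrib]
    rw [Finset.mem_Icc] at hj
    have := tele_aux (fun i => S j (T i ω)) (-j) ((m : ℤ) - 1) (by omega)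
    rw [this, show (m : ℤ) - 1 + 1 = (m : ℤ) by ring]
  have hq : ∑ i ∈ Finset.Icc (1 - (m : ℤ)) ((m : ℤ) - 1), Pproj μ ℱ i ξ0 ω
      = ∑ j ∈ Finset.Icc (1 - (m : ℤ)) ((m : ℤ) - 1), S j (T (-j) ω) := by
    rw [Finset.sum_congr rfl (fun i _ => hQw i)]
    have hneg := sum_neg_Icc m (fun j => S j (T (-j) ω))
    simp only [neg_neg] at hneg
    exact hneg
  linarith [hA, hB, hθ1, hθ2, htel, hq]

/-- The martingale–coboundary decomposition (equation (14) of the paper):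
`ξ_0 - d_0 = d_0∘T^m - d_0 + θ_{0,m} - θ_{0,m}∘T + ∑_{|i|≥m} P_i(ξ_0)
  - (∑_{|k|≥m} P_0(ξ_k))∘T^m` almost everywhere. -/
theorem stmt_16 {Ω : Type*} {m0 : MeasurableSpace Ω} (μ : Measure Ω) [IsProbabilityMeasure μ]
    (T : ℤ → Ω → Ω) (hT0 : T 0 = id) (hTadd : ∀ i j : ℤ, ∀ ω, T (i + j) ω = T i (T j ω))
    (hTmp : ∀ i, MeasurePreserving (T i) μ μ)
    (F0 : MeasurableSpace Ω)
    (ℱ : ℤ → MeasurableSpace Ω) (hℱdef : ∀ i, ℱ i = MeasurableSpace.comap (T i) F0)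
    (hℱmono : Monotone ℱ) (hℱle : ∀ i, ℱ i ≤ m0)
    (ξ0 : Ω → ℝ)
    (hL2 : MeasureTheory.MemLp ξ0 2 μ)
    (hreg : μ[ξ0 | ⨅ n : ℕ, ℱ (-(n : ℤ))] =ᵐ[μ] 0)
    (hmeas : StronglyMeasurable[⨆ i : ℤ, ℱ i] ξ0)
    (hsum : ∑' j : ℤ, eLpNorm (Pproj μ ℱ 0 (fun ω => ξ0 (T j ω))) 2 μ < ⊤)
    (m : ℕ) (hm : 1 ≤ m)
    (d0 : Ω → ℝ)
    (hd0 : ∀ ω, d0 ω = ∑' k : ℤ, Pproj μ ℱ 0 (fun ω' => ξ0 (T k ω')) ω)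
    (θ : Ω → ℝ)
    (hθ : ∀ ω, θ ω = ∑ k ∈ Finset.range (2 * m - 1),
        ∑ i ∈ Finset.Icc ((k : ℤ) - (m : ℤ) + 1) ((m : ℤ) - 1),
          Pproj μ ℱ i (fun ω' => ξ0 (T (k : ℤ) ω')) ω) :
    (fun ω => ξ0 ω - d0 ω) =ᵐ[μ]
      (fun ω =>
        d0 (T (m : ℤ) ω) - d0 ω + θ ω - θ (T 1 ω) +
          (∑' i : ℤ, if (m : ℤ) ≤ |i| then Pproj μ ℱ i ξ0 ω else 0) -
          ∑' k : ℤ, if (m : ℤ) ≤ |k|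
            then Pproj μ ℱ 0 (fun ω' => ξ0 (T k ω')) (T (m : ℤ) ω) else 0) :=
  stmt16_aux F0 μ T hT0 hTadd hTmp ℱ hℱdef hℱmono hℱle ξ0 hL2 hreg hmeas hsum m hm d0 hd0 θ hθ
end
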